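/- Let D be a weakly descendant-homogeneous digraph such that for every vertex x there exist a, b ∈ desc(x) with desc(a) ∩ desc(b) = ∅. Then D is connected and does not have property Z. -/

import Mathlib

variable {V : Type*}

/-- Directed walks of length `n` (`n`-arcs). -/
def arcOf (E : V → V → Prop) : ℕ → V → V → Prop
  | 0 => fun x y => x = y
  | n + 1 => fun x y => ∃ z, E x z ∧ arcOf E n z y

/-- Vertices reachable from `x` by a directed path of length exactly `n`. -/
def descN (E : V → V → Prop) (n : ℕ) (x : V) : Set V := {y | arcOf E n x y}

/-- The descendant set of `x` (including `x` itself). -/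
def desc (E : V → V → Prop) (x : V) : Set V := {y | ∃ n, arcOf E n x y}

theorem self_mem_desc (E : V → V → Prop) (x : V) : x ∈ desc E x := ⟨0, by simp [arcOf]⟩

def descSet (E : V → V → Prop) (S : Set V) : Set V := ⋃ x ∈ S, desc E x

theorem self_mem_descSet (E : V → V → Prop) {S : Set V} {x : V} (hx : x ∈ S) :
    x ∈ descSet E S := Set.mem_biUnion hx (self_mem_desc E x)

def outSet (E : V → V → Prop) (x : V) : Set V := {y | E x y}

def inSet (E : V → V → Prop) (x : V) : Set V := {y | E y x}

def IsAut (E : V → V → Prop) (g : Equiv.Perm V) : Prop := ∀ x y, E x y ↔ E (g x) (g y)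

def Rooted (E : V → V → Prop) (α : V) : Prop := ∀ y, y ∈ desc E α

def P0 (E : V → V → Prop) (α : V) (m : ℕ) : Prop :=
  0 < m ∧ (∀ x, (outSet E x).Finite ∧ (outSet E x).ncard = m) ∧
    ∀ s t : ℕ, s ≠ t → Disjoint (descN E s α) (descN E t α)

def P1 (E : V → V → Prop) : Prop :=
  ∀ u : V, ∃ f : desc E u ≃ V, ∀ x y : desc E u, (E x.1 y.1 ↔ E (f x) (f y))

def P2 (E : V → V → Prop) (α : V) : Prop :=
  ∀ i : ℕ, ∀ x ∈ descN E i α, ∀ y ∈ descN E i α,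
    ∃ g : Equiv.Perm V, IsAut E g ∧ g α = α ∧ g x = y

def P3 (E : V → V → Prop) (α : V) : Prop :=
  ∀ i : ℕ, (descN E i α).ncard < (descN E (i + 1) α).ncard

def EdgeTrans (E : V → V → Prop) : Prop :=
  ∀ a b c d : V, E a b → E c d → ∃ g : Equiv.Perm V, IsAut E g ∧ g a = c ∧ g b = d

def VertexTrans (E : V → V → Prop) : Prop :=
  ∀ u v : V, ∃ g : Equiv.Perm V, IsAut E g ∧ g u = v

def NoDirectedCycles (E : V → V → Prop) : Prop :=
  ∀ s : ℕ, 1 ≤ s → ∀ x : V, ¬ arcOf E s x x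

def HasPropZ {W : Type*} (E : W → W → Prop) : Prop :=
  ∃ f : W → ℤ, Function.Surjective f ∧ ∀ x y : W, E x y → f y = f x + 1

def deltaSetoid (E : V → V → Prop) (n : ℕ) : Setoid V :=
  ⟨fun u v => descN E n u = descN E n v, ⟨fun _ => rfl, Eq.symm, Eq.trans⟩⟩

def QEdge (E : V → V → Prop) (n : ℕ)
    (A B : Quotient (deltaSetoid E n)) : Prop :=
  ∃ a b : V, Quotient.mk (deltaSetoid E n) a = A ∧ Quotient.mk (deltaSetoid E n) b = B ∧ E a b

def cls (E : V → V → Prop) (n : ℕ) (v : V) : Set V := {u | descN E n u = descN E n v}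

def QEdgeSet (E : V → V → Prop) (A B : Set V) : Prop := ∃ a ∈ A, ∃ b ∈ B, E a b

def WDH (E : V → V → Prop) : Prop :=
  VertexTrans E ∧
  ∀ (X Y : Finset V) (f : descSet E (↑X : Set V) ≃ descSet E (↑Y : Set V)),
    (∀ a b : descSet E (↑X : Set V), (E a.1 b.1 ↔ E (f a).1 (f b).1)) →
    ∃ g : Equiv.Perm V, IsAut E g ∧
      ∀ (x : V) (hx : x ∈ X), g x = (f ⟨x, self_mem_descSet E (by exact_mod_cast hx)⟩).1

def EdgeT (E : V → V → Prop) := {p : V × V // E p.1 p.2}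

def reachSetoid (E : V → V → Prop) : Setoid (EdgeT E) :=
  ⟨Relation.EqvGen (fun a b => a.1.1 = b.1.1 ∨ a.1.2 = b.1.2),
    Relation.EqvGen.is_equivalence _⟩

def AlSources (E : V → V → Prop) (A : Quotient (reachSetoid E)) : Set V :=
  {v | ∃ e : EdgeT E, Quotient.mk (reachSetoid E) e = A ∧ v = e.1.1}

def AlSinks (E : V → V → Prop) (A : Quotient (reachSetoid E)) : Set V :=
  {v | ∃ e : EdgeT E, Quotient.mk (reachSetoid E) e = A ∧ v = e.1.2}

def AlEdge (E : V → V → Prop) (A B : Quotient (reachSetoid E)) : Prop :=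
  ∃ v, v ∈ AlSinks E A ∧ v ∈ AlSources E B

section AuxLemmas

theorem arcOf_trans {E : V → V → Prop} {m n : ℕ} {x y z : V}
    (h1 : arcOf E m x y) (h2 : arcOf E n y z) : arcOf E (m + n) x z := by
  induction m generalizing x with
  | zero =>
    have hxy : x = y := h1
    rw [Nat.zero_add]
    exact hxy ▸ h2
  | succ m ih =>
    obtain ⟨w, hxw, hw⟩ := h1
    rw [Nat.succ_add]
    exact ⟨w, hxw, ih hw⟩

theorem desc_trans {E : V → V → Prop} {x y : V} (h : y ∈ desc E x) :
    desc E y ⊆ desc E x := by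
  intro z hz
  obtain ⟨n, hn⟩ := hz
  obtain ⟨m, hm⟩ := h
  exact ⟨m + n, arcOf_trans hm hn⟩

theorem desc_closed {E : V → V → Prop} {x y z : V} (hy : y ∈ desc E x) (e : E y z) :
    z ∈ desc E x :=
  desc_trans hy ⟨1, z, e, rfl⟩

theorem arcOf_map {E : V → V → Prop} {g : Equiv.Perm V} (hg : IsAut E g) {n : ℕ} {x y : V}
    (h : arcOf E n x y) : arcOf E n (g x) (g y) := by
  induction n generalizing x with
  | zero =>
    have hxy : x = y := h
    exact congrArg g hxy
  | succ n ih =>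
    obtain ⟨z, e, h⟩ := h
    exact ⟨g z, (hg x z).mp e, ih h⟩

theorem isAut_symm {E : V → V → Prop} {g : Equiv.Perm V} (hg : IsAut E g) :
    IsAut E g.symm := by
  intro x y
  have := hg (g.symm x) (g.symm y)
  simpa using this.symm

theorem mem_desc_iff {E : V → V → Prop} {g : Equiv.Perm V} (hg : IsAut E g) (x y : V) :
    y ∈ desc E x ↔ g y ∈ desc E (g x) := by
  constructor
  · rintro ⟨n, h⟩; exact ⟨n, arcOf_map hg h⟩
  · rintro ⟨n, h⟩
    have := arcOf_map (isAut_symm hg) h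
    simp only [Equiv.symm_apply_apply] at this
    exact ⟨n, this⟩

theorem level {E : V → V → Prop} {f : V → ℤ} (hf : ∀ x y, E x y → f y = f x + 1)
    {n : ℕ} {x y : V} (h : arcOf E n x y) : f y = f x + n := by
  induction n generalizing x with
  | zero =>
    have hxy : x = y := h
    simp [hxy]
  | succ n ih =>
    obtain ⟨z, e, h⟩ := h
    have h1 := ih h
    have h2 := hf x z e
    push_cast
    push_cast at h1
    omega

theorem rtg_of_desc {E : V → V → Prop} {x y : V} (h : y ∈ desc E x) :
    Relation.ReflTransGen (fun a b => E a b ∨ E b a) x y := by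
  obtain ⟨n, h⟩ := h
  induction n generalizing x with
  | zero => exact (show x = y from h) ▸ Relation.ReflTransGen.refl
  | succ n ih =>
    obtain ⟨z, e, h⟩ := h
    exact Relation.ReflTransGen.head (Or.inl e) (ih h)

theorem mem_descSet_pair {E : V → V → Prop} [DecidableEq V] {a b x : V} :
    x ∈ descSet E (↑({a, b} : Finset V)) ↔ (x ∈ desc E a ∨ x ∈ desc E b) := by
  simp [descSet]

theorem swap_aut {E : V → V → Prop} (hwdh : WDH E) {a b a' b' : V}
    (hab : Disjoint (desc E a) (desc E b)) (hab' : Disjoint (desc E a') (desc E b'))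
    (θ η : Equiv.Perm V) (hθ : IsAut E θ) (hη : IsAut E η)
    (hθa : θ a = a') (hηb : η b = b') :
    ∃ g : Equiv.Perm V, IsAut E g ∧ g a = a' ∧ g b = b' := by
  classical
  have memθ : ∀ x, x ∈ desc E a ↔ θ x ∈ desc E a' := fun x => hθa ▸ mem_desc_iff hθ a x
  have memη : ∀ x, x ∈ desc E b ↔ η x ∈ desc E b' := fun x => hηb ▸ mem_desc_iff hη b x
  set F : V → V := fun x => if x ∈ desc E a then θ x else η x with hFdef
  set G : V → V := fun x => if x ∈ desc E a' then θ.symm x else η.symm x with hGdef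
  have hFT : ∀ x, (x ∈ desc E a ∨ x ∈ desc E b) → (F x ∈ desc E a' ∨ F x ∈ desc E b') := by
    intro x hx
    by_cases h : x ∈ desc E a
    · left; simp only [hFdef, if_pos h]; exact (memθ x).mp h
    · right; simp only [hFdef, if_neg h]; exact (memη x).mp (hx.resolve_left h)
  have hGS : ∀ y, (y ∈ desc E a' ∨ y ∈ desc E b') → (G y ∈ desc E a ∨ G y ∈ desc E b) := by
    intro y hy
    by_cases h : y ∈ desc E a'
    · left; simp only [hGdef, if_pos h]
      exact (memθ _).mpr (by simpa using h)
    · right; simp only [hGdef, if_neg h]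
      exact (memη _).mpr (by simpa using hy.resolve_left h)
  have hGF : ∀ x, (x ∈ desc E a ∨ x ∈ desc E b) → G (F x) = x := by
    intro x hx
    by_cases h : x ∈ desc E a
    · simp only [hFdef, hGdef, if_pos h, if_pos ((memθ x).mp h), Equiv.symm_apply_apply]
    · have hxb : x ∈ desc E b := hx.resolve_left h
      have hmem : η x ∈ desc E b' := (memη x).mp hxb
      have hna : η x ∉ desc E a' := fun h' => Set.disjoint_left.mp hab' h' hmem
      simp only [hFdef, hGdef, if_neg h, if_neg hna, Equiv.symm_apply_apply]
  have hFG : ∀ y, (y ∈ desc E a' ∨ y ∈ desc E b') → F (G y) = y := by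
    intro y hy
    by_cases h : y ∈ desc E a'
    · have hmem : θ.symm y ∈ desc E a := (memθ _).mpr (by simpa using h)
      simp only [hGdef, hFdef, if_pos h, if_pos hmem, Equiv.apply_symm_apply]
    · have hyb : y ∈ desc E b' := hy.resolve_left h
      have hmem : η.symm y ∈ desc E b := (memη _).mpr (by simpa using hyb)
      have hna : η.symm y ∉ desc E a := fun h' => Set.disjoint_left.mp hab h' hmem
      simp only [hGdef, hFdef, if_neg h, if_neg hna, Equiv.apply_symm_apply]
  have hedge : ∀ x y, (x ∈ desc E a ∨ x ∈ desc E b) → (y ∈ desc E a ∨ y ∈ desc E b) →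
      (E x y ↔ E (F x) (F y)) := by
    intro x y hx hy
    by_cases h1 : x ∈ desc E a <;> by_cases h2 : y ∈ desc E a
    · simp only [hFdef, if_pos h1, if_pos h2]; exact hθ x y
    · have hyb : y ∈ desc E b := hy.resolve_left h2
      simp only [hFdef, if_pos h1, if_neg h2]
      exact iff_of_false (fun e => h2 (desc_closed h1 e))
        (fun e => Set.disjoint_left.mp hab' (desc_closed ((memθ x).mp h1) e) ((memη y).mp hyb))
    · have hxb : x ∈ desc E b := hx.resolve_left h1
      simp only [hFdef, if_neg h1, if_pos h2]
      exact iff_of_false (fun e => Set.disjoint_left.mp hab h2 (desc_closed hxb e))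
        (fun e => Set.disjoint_left.mp hab' ((memθ y).mp h2) (desc_closed ((memη x).mp hxb) e))
    · have hxb : x ∈ desc E b := hx.resolve_left h1
      simp only [hFdef, if_neg h1, if_neg h2]
      exact hη x y
  let X : Finset V := {a, b}
  let Y : Finset V := {a', b'}
  have hmS : ∀ x, x ∈ descSet E (↑X : Set V) ↔ (x ∈ desc E a ∨ x ∈ desc E b) :=
    fun x => mem_descSet_pair
  have hmT : ∀ x, x ∈ descSet E (↑Y : Set V) ↔ (x ∈ desc E a' ∨ x ∈ desc E b') :=
    fun x => mem_descSet_pair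
  let f : descSet E (↑X : Set V) ≃ descSet E (↑Y : Set V) :=
    { toFun := fun x => ⟨F x.1, (hmT _).mpr (hFT x.1 ((hmS _).mp x.2))⟩
      invFun := fun y => ⟨G y.1, (hmS _).mpr (hGS y.1 ((hmT _).mp y.2))⟩
      left_inv := fun x => Subtype.ext (hGF x.1 ((hmS _).mp x.2))
      right_inv := fun y => Subtype.ext (hFG y.1 ((hmT _).mp y.2)) }
  obtain ⟨g, hg, hgx⟩ := hwdh.2 X Y f
    (fun p q => hedge p.1 q.1 ((hmS _).mp p.2) ((hmS _).mp q.2))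
  refine ⟨g, hg, ?_, ?_⟩
  · have ha : a ∈ X := by simp [X]
    rw [hgx a ha]
    show F a = a'
    simp only [hFdef, if_pos (self_mem_desc E a), hθa]
  · have hb : b ∈ X := by simp [X]
    rw [hgx b hb]
    show F b = b'
    have hnb : b ∉ desc E a := fun h' => Set.disjoint_left.mp hab h' (self_mem_desc E b)
    simp only [hFdef, if_neg hnb, hηb]

theorem swap_pair {E : V → V → Prop} (hwdh : WDH E) {a b : V}
    (hab : Disjoint (desc E a) (desc E b)) :
    ∃ g : Equiv.Perm V, IsAut E g ∧ g a = b ∧ g b = a := by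
  obtain ⟨θ, hθ, hθa⟩ := hwdh.1 a b
  obtain ⟨η, hη, hηb⟩ := hwdh.1 b a
  exact swap_aut hwdh hab hab.symm θ η hθ hη hθa hηb

theorem hom_shift {E : V → V → Prop} {f : V → ℤ} (hf : ∀ x y, E x y → f y = f x + 1)
    {g : Equiv.Perm V} (hg : IsAut E g) {x y : V} (hy : y ∈ desc E x) :
    f (g y) - f y = f (g x) - f x := by
  obtain ⟨n, hn⟩ := hy
  have h1 := level hf hn
  have h2 := level hf (arcOf_map hg hn)
  omega

end AuxLemmas

/-- a weakly descendant-homogeneous digraph in which every descendant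
set contains two vertices with disjoint descendant sets is connected and has no
property Z. -/
theorem wdh_connected_no_propZ (E : V → V → Prop)
    (hwdh : WDH E)
    (hsplit : ∀ x : V, ∃ a ∈ desc E x, ∃ b ∈ desc E x, Disjoint (desc E a) (desc E b)) :
    (∀ u v : V, Relation.ReflTransGen (fun a b => E a b ∨ E b a) u v) ∧
    ¬ HasPropZ E := by
  classical
  have hsymm : Symmetric (fun a b => E a b ∨ E b a) := fun a b h => h.symm
  have conn : ∀ u v : V, Relation.ReflTransGen (fun a b => E a b ∨ E b a) u v := by
    intro u v
    by_contra hcon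
    obtain ⟨a, ha, b, hb, hab⟩ := hsplit u
    have hav : Disjoint (desc E a) (desc E v) := by
      rw [Set.disjoint_left]
      intro z hza hzv
      exact hcon (((rtg_of_desc ha).trans (rtg_of_desc hza)).trans
        ((@Relation.ReflTransGen.symmetric _ _ ⟨fun _ _ h => hsymm h⟩).symm _ _ (rtg_of_desc hzv)))
    obtain ⟨θ, hθ, hθa⟩ := hwdh.1 a a
    obtain ⟨η, hη, hηb⟩ := hwdh.1 b v
    obtain ⟨g, hg, hga, hgb⟩ := swap_aut hwdh hab hav θ η hθ hη hθa hηb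
    have habr : Relation.ReflTransGen (fun a b => E a b ∨ E b a) a b :=
      ((@Relation.ReflTransGen.symmetric _ _ ⟨fun _ _ h => hsymm h⟩).symm _ _ (rtg_of_desc ha)).trans (rtg_of_desc hb)
    have hgab : Relation.ReflTransGen (fun a b => E a b ∨ E b a) (g a) (g b) :=
      Relation.ReflTransGen.lift g
        (fun p q h => Or.imp (hg p q).mp (hg q p).mp h) _ _ habr
    rw [hga, hgb] at hgab
    exact hcon ((rtg_of_desc ha).trans hgab)
  refine ⟨conn, ?_⟩
  rintro ⟨f, fsurj, fhom⟩
  obtain ⟨x, -⟩ := fsurj 0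
  obtain ⟨a, ha, b, hb, hab⟩ := hsplit x
  obtain ⟨c, hc, d, hd, hcd⟩ := hsplit a
  have hcx : c ∈ desc E x := desc_trans ha hc
  have key : ∀ p q : V, p ∈ desc E x → q ∈ desc E x →
      Disjoint (desc E p) (desc E q) → f p = f q := by
    intro p q hp hq hpq
    obtain ⟨g, hg, hgp, hgq⟩ := swap_pair hwdh hpq
    have h1 := hom_shift fhom hg hp
    have h2 := hom_shift fhom hg hq
    rw [hgp] at h1
    rw [hgq] at h2
    omega
  have hfab := key a b ha hb hab
  have hfcb := key c b hcx hb (hab.mono_left (desc_trans hc))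
  obtain ⟨k, hk⟩ := hc
  have hlev := level fhom hk
  have hk0 : k = 0 := by omega
  subst hk0
  have hac : a = c := hk
  subst hac
  exact Set.disjoint_left.mp hcd hd (self_mem_desc E d)
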